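/- Let H be a graph on [k] containing edge {1,2}, and let G, G' be k-partite weighted graphs on parts V₁,…,V_k (each of size at most n), identical except possibly on the bipartite graph between V₁ and V₂, with all weights of G in [0,1]. Then |hom*(H,G) − hom*(H,G')| ≤ n^{k−2} · max_{U⊆V₁, W⊆V₂} |e_{G₁₂}(U,W) − e_{G'₁₂}(U,W)|, where G₁₂, G'₁₂ denote the bipartite graphs between V₁ and V₂. -/

import Mathlib

open Finset

/-- One-variable extreme point lemma: a [0,1]-weighted sum is dominated by the sum
over some subset. -/
lemma stmt17_lemB {α : Type} [Fintype α] (f c : α → ℝ)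
    (hf : ∀ x, f x ∈ Set.Icc (0:ℝ) 1) :
    ∃ U : Finset α, |∑ x, f x * c x| ≤ |∑ x ∈ U, c x| := by
  classical
  set P := Finset.univ.filter (fun x => 0 ≤ c x) with hP
  set N := Finset.univ.filter (fun x => ¬ 0 ≤ c x) with hN
  have hsplit : ∑ x, f x * c x
      = ∑ x ∈ P, f x * c x + ∑ x ∈ N, f x * c x :=
    (Finset.sum_filter_add_sum_filter_not Finset.univ (fun x => 0 ≤ c x) _).symm
  have h1 : ∑ x, f x * c x ≤ ∑ x ∈ P, c x := by
    have hA : ∑ x ∈ P, f x * c x ≤ ∑ x ∈ P, c x :=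
      Finset.sum_le_sum (fun x hx => by
        have hc := (Finset.mem_filter.mp hx).2
        nlinarith [(hf x).1, (hf x).2])
    have hB : ∑ x ∈ N, f x * c x ≤ 0 :=
      Finset.sum_nonpos (fun x hx => by
        have hc := (Finset.mem_filter.mp hx).2
        exact mul_nonpos_of_nonneg_of_nonpos (hf x).1 (le_of_not_ge hc))
    linarith
  have h2 : ∑ x ∈ N, c x ≤ ∑ x, f x * c x := by
    have hA : ∑ x ∈ N, c x ≤ ∑ x ∈ N, f x * c x :=
      Finset.sum_le_sum (fun x hx => by
        have hc := (Finset.mem_filter.mp hx).2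
        nlinarith [(hf x).1, (hf x).2])
    have hB : 0 ≤ ∑ x ∈ P, f x * c x :=
      Finset.sum_nonneg (fun x hx => by
        have hc := (Finset.mem_filter.mp hx).2
        exact mul_nonneg (hf x).1 hc)
    linarith
  rcases le_total 0 (∑ x, f x * c x) with h | h
  · exact ⟨P, by rw [abs_of_nonneg h]; exact h1.trans (le_abs_self _)⟩
  · refine ⟨N, ?_⟩
    rw [abs_of_nonpos h]
    have := neg_le_neg h2
    exact this.trans (neg_le_abs _)

/-- Bilinear extreme point lemma. -/
lemma stmt17_lemA {α β : Type} [Fintype α] [Fintype β]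
    (f : α → ℝ) (g : β → ℝ) (D : α → β → ℝ)
    (hf : ∀ x, f x ∈ Set.Icc (0:ℝ) 1) (hg : ∀ y, g y ∈ Set.Icc (0:ℝ) 1) :
    |∑ x, ∑ y, f x * g y * D x y|
      ≤ ⨆ p : Finset α × Finset β, |∑ u ∈ p.1, ∑ v ∈ p.2, D u v| := by
  classical
  have step1 : ∑ x, ∑ y, f x * g y * D x y = ∑ x, f x * ∑ y, g y * D x y := by
    refine Finset.sum_congr rfl fun x _ => ?_
    rw [Finset.mul_sum]
    exact Finset.sum_congr rfl fun y _ => by ring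
  obtain ⟨U, hU⟩ := stmt17_lemB f (fun x => ∑ y, g y * D x y) hf
  have step2 : ∑ x ∈ U, ∑ y, g y * D x y = ∑ y, g y * ∑ x ∈ U, D x y := by
    rw [Finset.sum_comm]
    exact Finset.sum_congr rfl fun y _ => (Finset.mul_sum _ _ _).symm
  obtain ⟨W, hW⟩ := stmt17_lemB g (fun y => ∑ x ∈ U, D x y) hg
  have step3 : ∑ y ∈ W, ∑ x ∈ U, D x y = ∑ u ∈ U, ∑ v ∈ W, D u v := Finset.sum_comm
  have hbdd : BddAbove (Set.range fun p : Finset α × Finset β =>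
      |∑ u ∈ p.1, ∑ v ∈ p.2, D u v|) := Set.Finite.bddAbove (Set.finite_range _)
  calc |∑ x, ∑ y, f x * g y * D x y|
      = |∑ x, f x * ∑ y, g y * D x y| := by rw [step1]
    _ ≤ |∑ x ∈ U, ∑ y, g y * D x y| := hU
    _ = |∑ y, g y * ∑ x ∈ U, D x y| := by rw [step2]
    _ ≤ |∑ y ∈ W, ∑ x ∈ U, D x y| := hW
    _ = |∑ u ∈ U, ∑ v ∈ W, D u v| := by rw [step3]
    _ ≤ _ := le_ciSup hbdd (U, W)

lemma stmt17_cons_ne_one {k : ℕ} (V : Fin (k+2) → Type) (x : V 0) (y y' : V 1)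
    (z : ∀ i : Fin k, V i.succ.succ) :
    ∀ i : Fin (k+2), i ≠ 1 →
      Fin.cons (α := V) x (Fin.cons y z) i = Fin.cons (α := V) x (Fin.cons y' z) i := by
  intro i hi
  rcases Fin.eq_zero_or_eq_succ i with h | ⟨j, rfl⟩
  · subst h; rfl
  · rcases Fin.eq_zero_or_eq_succ j with h | ⟨j', rfl⟩
    · subst h; exact absurd Fin.succ_zero_eq_one hi
    · simp [Fin.cons_succ]; rfl

lemma stmt17_cons_ne_zero {k : ℕ} (V : Fin (k+2) → Type) (x x' : V 0) (y : V 1)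
    (z : ∀ i : Fin k, V i.succ.succ) :
    ∀ i : Fin (k+2), i ≠ 0 →
      Fin.cons (α := V) x (Fin.cons y z) i = Fin.cons (α := V) x' (Fin.cons y z) i := by
  intro i hi
  rcases Fin.eq_zero_or_eq_succ i with h | ⟨j, rfl⟩
  · exact absurd h hi
  · simp [Fin.cons_succ]

lemma stmt17_sum_decomp {k : ℕ} (V : Fin (k+2) → Type) [∀ i, Fintype (V i)]
    (h : (∀ i, V i) → ℝ) :
    ∑ v, h v = ∑ x : V 0, ∑ y : V 1, ∑ z : ∀ i : Fin k, V (i.succ.succ),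
      h (Fin.cons x (Fin.cons y z)) := by
  rw [← Equiv.sum_comp (Fin.consEquiv V) h, Fintype.sum_prod_type]
  apply Finset.sum_congr rfl; intro x _
  rw [← Equiv.sum_comp (Fin.consEquiv (fun i : Fin (k+1) => V i.succ)) _,
    Fintype.sum_prod_type]
  rfl

/-- Multipartite homomorphism count: the sum over tuples of the product of edge weights. -/
def homStar {k : ℕ} (H : SimpleGraph (Fin k)) [DecidableRel H.Adj]
    (V : Fin k → Type) [∀ i, Fintype (V i)]
    (w : ∀ i j, V i → V j → ℝ) : ℝ :=
  ∑ v : (∀ i, V i),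
    ∏ p ∈ Finset.univ.filter (fun p : Fin k × Fin k => p.1 < p.2 ∧ H.Adj p.1 p.2),
      w p.1 p.2 (v p.1) (v p.2)


theorem stmt_17 (k n : ℕ) (H : SimpleGraph (Fin (k + 2))) [DecidableRel H.Adj]
    (hadj : H.Adj 0 1)
    (V : Fin (k + 2) → Type) [∀ i, Fintype (V i)]
    (hcard : ∀ i, Fintype.card (V i) ≤ n)
    (w w' : ∀ i j, V i → V j → ℝ)
    (hw : ∀ i j x y, w i j x y ∈ Set.Icc (0 : ℝ) 1)
    (hagree : ∀ i j : Fin (k + 2), (i, j) ≠ ((0 : Fin (k + 2)), (1 : Fin (k + 2))) →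
      w' i j = w i j) :
    |homStar H V w - homStar H V w'| ≤
      (n : ℝ) ^ k *
        ⨆ p : Finset (V 0) × Finset (V 1),
          |∑ u ∈ p.1, ∑ v ∈ p.2, (w 0 1 u v - w' 0 1 u v)| := by
  classical
  set D : V 0 → V 1 → ℝ := fun u v => w 0 1 u v - w' 0 1 u v with hD
  set S := ⨆ p : Finset (V 0) × Finset (V 1), |∑ u ∈ p.1, ∑ v ∈ p.2, D u v| with hSdef
  have hbdd : BddAbove (Set.range fun p : Finset (V 0) × Finset (V 1) =>
      |∑ u ∈ p.1, ∑ v ∈ p.2, D u v|) := Set.Finite.bddAbove (Set.finite_range _)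
  have hS0 : (0:ℝ) ≤ S := by
    have h := le_ciSup hbdd ((∅, ∅) : Finset (V 0) × Finset (V 1))
    simpa using h
  set E := Finset.univ.filter
    (fun p : Fin (k+2) × Fin (k+2) => p.1 < p.2 ∧ H.Adj p.1 p.2) with hE
  have hmem : ((0,1) : Fin (k+2) × Fin (k+2)) ∈ E := by
    simp only [hE, Finset.mem_filter, Finset.mem_univ, true_and]
    exact ⟨Fin.zero_lt_one, hadj⟩
  set F : (∀ i, V i) → ℝ := fun v => ∏ p ∈ E.erase (0,1), w p.1 p.2 (v p.1) (v p.2)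
    with hF
  have hdiff : homStar H V w - homStar H V w'
      = ∑ v : (∀ i, V i), D (v 0) (v 1) * F v := by
    unfold homStar
    rw [← Finset.sum_sub_distrib]
    refine Finset.sum_congr rfl fun v _ => ?_
    rw [← Finset.mul_prod_erase E (fun p => w p.1 p.2 (v p.1) (v p.2)) hmem,
      ← Finset.mul_prod_erase E (fun p => w' p.1 p.2 (v p.1) (v p.2)) hmem]
    have heq : ∏ p ∈ E.erase (0,1), w' p.1 p.2 (v p.1) (v p.2) = F v := by
      refine Finset.prod_congr rfl fun p hp => ?_
      have hne := Finset.ne_of_mem_erase hp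
      rw [hagree p.1 p.2 (by simpa using hne)]
    rw [heq, hF]
    ring
  rw [hdiff]
  rcases isEmpty_or_nonempty (∀ i, V i) with hemp | hne
  · rw [Finset.univ_eq_empty, Finset.sum_empty, abs_zero]
    exact mul_nonneg (pow_nonneg (Nat.cast_nonneg n) k) hS0
  obtain ⟨v₀⟩ := hne
  -- key facts about edges in E.erase (0,1)
  have hedge : ∀ p : Fin (k+2) × Fin (k+2), p ∈ E.erase (0,1) →
      p ≠ (0,1) ∧ p.1 < p.2 := by
    intro p hp
    refine ⟨Finset.ne_of_mem_erase hp, ?_⟩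
    have := Finset.mem_of_mem_erase hp
    rw [hE, Finset.mem_filter] at this
    exact this.2.1
  have hsum : ∑ v : (∀ i, V i), D (v 0) (v 1) * F v
      = ∑ z : ∀ i : Fin k, V (i.succ.succ), ∑ x : V 0, ∑ y : V 1,
          D x y * F (Fin.cons x (Fin.cons y z)) := by
    rw [stmt17_sum_decomp V (fun v => D (v 0) (v 1) * F v)]
    calc ∑ x : V 0, ∑ y : V 1, ∑ z : ∀ i : Fin k, V (i.succ.succ),
          D x y * F (Fin.cons x (Fin.cons y z))
        = ∑ x : V 0, ∑ z : ∀ i : Fin k, V (i.succ.succ), ∑ y : V 1,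
          D x y * F (Fin.cons x (Fin.cons y z)) :=
          Finset.sum_congr rfl fun x _ => Finset.sum_comm
      _ = _ := Finset.sum_comm
  rw [hsum]
  have hQ : ∀ z : ∀ i : Fin k, V (i.succ.succ),
      |∑ x : V 0, ∑ y : V 1, D x y * F (Fin.cons x (Fin.cons y z))| ≤ S := by
    intro z
    set f : V 0 → ℝ := fun x =>
      ∏ p ∈ (E.erase (0,1)).filter (fun p => ¬ p.1 = 1),
        w p.1 p.2 ((Fin.cons x (Fin.cons (v₀ 1) z) : ∀ i, V i) p.1)
          ((Fin.cons x (Fin.cons (v₀ 1) z) : ∀ i, V i) p.2) with hf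
    set g : V 1 → ℝ := fun y =>
      ∏ p ∈ (E.erase (0,1)).filter (fun p => p.1 = 1),
        w p.1 p.2 ((Fin.cons (v₀ 0) (Fin.cons y z) : ∀ i, V i) p.1)
          ((Fin.cons (v₀ 0) (Fin.cons y z) : ∀ i, V i) p.2) with hg
    have hfact : ∀ (x : V 0) (y : V 1),
        F (Fin.cons x (Fin.cons y z)) = f x * g y := by
      intro x y
      rw [hF]
      simp only []
      rw [← Finset.prod_filter_mul_prod_filter_not (E.erase (0,1))
        (fun p => p.1 = 1) (fun p => w p.1 p.2
          ((Fin.cons x (Fin.cons y z) : ∀ i, V i) p.1)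
          ((Fin.cons x (Fin.cons y z) : ∀ i, V i) p.2)), mul_comm]
      congr 1
      · refine Finset.prod_congr rfl fun p hp => ?_
        rw [Finset.mem_filter] at hp
        obtain ⟨hpE, hp1⟩ := hp
        obtain ⟨hpne, hplt⟩ := hedge p hpE
        have h2ne1 : p.2 ≠ 1 := by
          intro h21
          apply hpne
          have h10 : p.1 = 0 := by
            have : p.1 < 1 := h21 ▸ hplt
            exact (Fin.lt_one_iff p.1).mp this
          exact Prod.ext h10 h21
        rw [stmt17_cons_ne_one V x y (v₀ 1) z p.1 hp1,
          stmt17_cons_ne_one V x y (v₀ 1) z p.2 h2ne1]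
      · refine Finset.prod_congr rfl fun p hp => ?_
        rw [Finset.mem_filter] at hp
        obtain ⟨hpE, hp1⟩ := hp
        obtain ⟨hpne, hplt⟩ := hedge p hpE
        have h1ne0 : p.1 ≠ 0 := by rw [hp1]; exact one_ne_zero
        have h2ne0 : p.2 ≠ 0 := by
          intro h20
          rw [h20] at hplt
          exact absurd hplt (Fin.not_lt_zero p.1)
        rw [stmt17_cons_ne_zero V x (v₀ 0) y z p.1 h1ne0,
          stmt17_cons_ne_zero V x (v₀ 0) y z p.2 h2ne0]
    have hf01 : ∀ x, f x ∈ Set.Icc (0:ℝ) 1 := fun x =>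
      ⟨Finset.prod_nonneg fun p _ => (hw _ _ _ _).1,
       Finset.prod_le_one (fun p _ => (hw _ _ _ _).1) (fun p _ => (hw _ _ _ _).2)⟩
    have hg01 : ∀ y, g y ∈ Set.Icc (0:ℝ) 1 := fun y =>
      ⟨Finset.prod_nonneg fun p _ => (hw _ _ _ _).1,
       Finset.prod_le_one (fun p _ => (hw _ _ _ _).1) (fun p _ => (hw _ _ _ _).2)⟩
    calc |∑ x : V 0, ∑ y : V 1, D x y * F (Fin.cons x (Fin.cons y z))|
        = |∑ x : V 0, ∑ y : V 1, f x * g y * D x y| := by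
          congr 1
          refine Finset.sum_congr rfl fun x _ => Finset.sum_congr rfl fun y _ => ?_
          rw [hfact x y]; ring
      _ ≤ S := stmt17_lemA f g D hf01 hg01
  have hcardZ : (Fintype.card (∀ i : Fin k, V (i.succ.succ)) : ℝ) ≤ (n:ℝ) ^ k := by
    have hn : Fintype.card (∀ i : Fin k, V (i.succ.succ)) ≤ n ^ k := by
      rw [Fintype.card_pi]
      calc ∏ i : Fin k, Fintype.card (V (i.succ.succ))
          ≤ ∏ _i : Fin k, n := Finset.prod_le_prod' fun i _ => hcard _
        _ = n ^ k := by simp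
    calc (Fintype.card (∀ i : Fin k, V (i.succ.succ)) : ℝ) ≤ ((n ^ k : ℕ) : ℝ) := by
          exact_mod_cast hn
      _ = (n:ℝ) ^ k := by push_cast; ring
  calc |∑ z : ∀ i : Fin k, V (i.succ.succ), ∑ x : V 0, ∑ y : V 1,
          D x y * F (Fin.cons x (Fin.cons y z))|
      ≤ ∑ z : ∀ i : Fin k, V (i.succ.succ), |∑ x : V 0, ∑ y : V 1,
          D x y * F (Fin.cons x (Fin.cons y z))| := Finset.abs_sum_le_sum_abs _ _
    _ ≤ ∑ _z : ∀ i : Fin k, V (i.succ.succ), S := Finset.sum_le_sum fun z _ => hQ z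
    _ = (Fintype.card (∀ i : Fin k, V (i.succ.succ)) : ℝ) * S := by
        rw [Finset.sum_const, nsmul_eq_mul, Finset.card_univ]
    _ ≤ (n:ℝ) ^ k * S := mul_le_mul_of_nonneg_right hcardZ hS0
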